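/- arXiv:2202.12594 — 8 statements merged into one kernel-verified Lean document; each statement's English description precedes it below -/
import Mathlib

section
/- Let m ≥ 1 and consider 0/1-valued variables x_1,…,x_m, x_1',…,x_m' and α₀,α₁,α₁',α₂,α₂',α₃,α₃' (write A for the set of the seven α-variables). Suppose that: (G1) for every α ∈ A, with B some fixed 3-element subset of A∖{α}, both ∑_{i∈[m]} x_i + ∑_{β∈B} β + 1 ≤ α + ∑_{i∈[m]} x_i' + ∑_{β∈A∖(B∪{α})} β and ∑_{i∈[m]} x_i' + ∑_{β∈A∖(B∪{α})} β + 1 ≤ α + ∑_{i∈[m]} x_i + ∑_{β∈B} β hold; and (G2) for every i ∈ [m], the four inequalities x_i + ∑_{j≠i} x_j + 1 ≤ α₀ + x_i' + ∑_{j≠i} x_j', x_i + ∑_{j≠i} x_j' + 1 ≤ α₀ + x_i' + ∑_{j≠i} x_j, x_i' + ∑_{j≠i} x_j + 1 ≤ α₀ + x_i + ∑_{j≠i} x_j', and x_i' + ∑_{j≠i} x_j' + 1 ≤ α₀ + x_i + ∑_{j≠i} x_j all hold. Then α = 1 for every α ∈ A, and x_i = x_i' for every i ∈ [m]. -/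
open Finset

/-- The gadget inequalities (G1) and (G2) force `α = 1` for all
seven `α`-variables and `x i = x' i` for all `i ∈ [m]`.  The seven
`α`-variables `α₀, α₁, α₁', α₂, α₂', α₃, α₃'` are encoded as `α : Fin 7 → ℕ`. -/
theorem gadget_forces_alpha_one_and_x_eq_x' (m : ℕ) (hm : 1 ≤ m)
    (x x' : Fin m → ℕ) (α : Fin 7 → ℕ)
    (hx : ∀ i, x i ≤ 1) (hx' : ∀ i, x' i ≤ 1) (hα : ∀ a, α a ≤ 1)
    (hG1 : ∀ a : Fin 7, ∃ B : Finset (Fin 7), B ⊆ Finset.univ \ {a} ∧ B.card = 3 ∧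
      ((∑ i, x i) + (∑ b ∈ B, α b) + 1 ≤
          α a + (∑ i, x' i) + ∑ b ∈ Finset.univ \ (B ∪ {a}), α b) ∧
      ((∑ i, x' i) + (∑ b ∈ Finset.univ \ (B ∪ {a}), α b) + 1 ≤
          α a + (∑ i, x i) + ∑ b ∈ B, α b))
    (hG2 : ∀ i : Fin m,
      (x i + (∑ j ∈ Finset.univ.erase i, x j) + 1 ≤
          α 0 + x' i + ∑ j ∈ Finset.univ.erase i, x' j) ∧
      (x i + (∑ j ∈ Finset.univ.erase i, x' j) + 1 ≤
          α 0 + x' i + ∑ j ∈ Finset.univ.erase i, x j) ∧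
      (x' i + (∑ j ∈ Finset.univ.erase i, x j) + 1 ≤
          α 0 + x i + ∑ j ∈ Finset.univ.erase i, x' j) ∧
      (x' i + (∑ j ∈ Finset.univ.erase i, x' j) + 1 ≤
          α 0 + x i + ∑ j ∈ Finset.univ.erase i, x j)) :
    (∀ a, α a = 1) ∧ ∀ i, x i = x' i := by
  have hA : ∀ a, α a = 1 := by
    intro a
    obtain ⟨B, -, -, h1, h2⟩ := hG1 a
    have := hα a
    omega
  refine ⟨hA, fun i => ?_⟩
  obtain ⟨h1, h2, h3, h4⟩ := hG2 i
  have h0 := hA 0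
  omega
end

section
/- Let φ be a 3-CNF formula over m Boolean variables in which every clause uses three distinct variables, and let S(φ) be the associated system of inequalities over 0/1-valued variables x_1,…,x_m, x_1',…,x_m', α₀, α₁, α₁', α₂, α₂', α₃, α₃' consisting of the 14 group-(G1) inequalities, the 4m group-(G2) inequalities, and one clause inequality per clause of φ. If σ : [m] → {0,1} is a satisfying assignment of φ, then the assignment x_i = x_i' = σ(i) for all i ∈ [m] and α = 1 for all seven α-variables satisfies every inequality of S(φ). -/
open Finset

/-- A 3-CNF clause over `m` Boolean variables using three distinct variables
`i, j, t`, where the first `neg` of the three literals are negated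
(negated variables are listed first). -/
structure Clause3 (m : ℕ) where
  i : Fin m
  j : Fin m
  t : Fin m
  /-- the number of negated literals; the negated variables come first -/
  neg : Fin 4
  hij : i ≠ j
  hit : i ≠ t
  hjt : j ≠ t

/-- Satisfaction of a clause by a 0/1 assignment `σ`: the sum of the
(possibly negated) literal values is at least 1. -/
def clauseSat {m : ℕ} (σ : Fin m → ℕ) (c : Clause3 m) : Prop :=
  if c.neg = 0 then 1 ≤ σ c.i + σ c.j + σ c.t
  else if c.neg = 1 then 1 ≤ (1 - σ c.i) + σ c.j + σ c.t
  else if c.neg = 2 then 1 ≤ (1 - σ c.i) + (1 - σ c.j) + σ c.t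
  else 1 ≤ (1 - σ c.i) + (1 - σ c.j) + (1 - σ c.t)

/-- The characteristic inequality of the agent corresponding to a clause.
The seven `α`-variables `α₀, α₁, α₁', α₂, α₂', α₃, α₃'` are `α 0, …, α 6`. -/
def clauseIneq {m : ℕ} (x x' : Fin m → ℕ) (α : Fin 7 → ℕ) (c : Clause3 m) : Prop :=
  if c.neg = 0 then
    1 + α 0 ≤ (x c.i + x c.j + x c.t) + (x' c.i + x' c.j + x' c.t)
  else if c.neg = 1 then
    1 + α 0 + x c.i + x' c.i ≤ (α 1 + α 2) + (x c.j + x c.t) + (x' c.j + x' c.t)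
  else if c.neg = 2 then
    1 + α 0 + (x c.i + x c.j) + (x' c.i + x' c.j) ≤
      (α 1 + α 2) + (α 3 + α 4) + x c.t + x' c.t
  else
    1 + α 0 + (x c.i + x c.j + x c.t) + (x' c.i + x' c.j + x' c.t) ≤
      (α 1 + α 2) + (α 3 + α 4) + (α 5 + α 6)

/-- The 14 group-(G1) inequalities, where for each `α`-variable `a` the fixed
3-element subset `B a ⊆ A \ {a}` has been chosen. -/
def G1ineq {m : ℕ} (x x' : Fin m → ℕ) (α : Fin 7 → ℕ)
    (B : Fin 7 → Finset (Fin 7)) : Prop :=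
  ∀ a : Fin 7,
    ((∑ i, x i) + (∑ b ∈ B a, α b) + 1 ≤
        α a + (∑ i, x' i) + ∑ b ∈ Finset.univ \ (B a ∪ {a}), α b) ∧
    ((∑ i, x' i) + (∑ b ∈ Finset.univ \ (B a ∪ {a}), α b) + 1 ≤
        α a + (∑ i, x i) + ∑ b ∈ B a, α b)

/-- The 4m group-(G2) inequalities. -/
def G2ineq {m : ℕ} (x x' : Fin m → ℕ) (α : Fin 7 → ℕ) : Prop :=
  ∀ i : Fin m,
    (x i + (∑ j ∈ Finset.univ.erase i, x j) + 1 ≤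
        α 0 + x' i + ∑ j ∈ Finset.univ.erase i, x' j) ∧
    (x i + (∑ j ∈ Finset.univ.erase i, x' j) + 1 ≤
        α 0 + x' i + ∑ j ∈ Finset.univ.erase i, x j) ∧
    (x' i + (∑ j ∈ Finset.univ.erase i, x j) + 1 ≤
        α 0 + x i + ∑ j ∈ Finset.univ.erase i, x' j) ∧
    (x' i + (∑ j ∈ Finset.univ.erase i, x' j) + 1 ≤
        α 0 + x i + ∑ j ∈ Finset.univ.erase i, x j)

/-- A satisfying assignment `σ` of the 3-CNF formula `φ` yields,
via `x i = x' i = σ i` and `α = 1`, a 0/1 solution of the whole system `S(φ)`. -/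
theorem satisfying_assignment_solves_system (m : ℕ) (φ : List (Clause3 m))
    (B : Fin 7 → Finset (Fin 7))
    (hB : ∀ a, B a ⊆ Finset.univ \ {a} ∧ (B a).card = 3)
    (σ : Fin m → ℕ) (hσ : ∀ i, σ i ≤ 1) (hsat : ∀ c ∈ φ, clauseSat σ c) :
    G1ineq σ σ (fun _ => 1) B ∧ G2ineq σ σ (fun _ => 1) ∧
      ∀ c ∈ φ, clauseIneq σ σ (fun _ => 1) c := by
  refine ⟨?_, ?_, ?_⟩
  · intro a
    have h1 := (hB a).1
    have h2 := (hB a).2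
    have haB : a ∉ B a := fun h => by
      have := h1 h; simp at this
    have hcard : (Finset.univ \ (B a ∪ {a})).card = 3 := by
      rw [Finset.card_sdiff_of_subset (by simp)]
      rw [Finset.card_union_of_disjoint (by simp [haB])]
      simp [h2]
    constructor <;>
    · simp only [Finset.sum_const, smul_eq_mul, mul_one, h2, hcard]
      omega
  · intro i
    refine ⟨?_, ?_, ?_, ?_⟩ <;> simp only [] <;> omega
  · intro c hc
    have hs := hsat c hc
    have hi := hσ c.i
    have hj := hσ c.j
    have ht := hσ c.t
    unfold clauseSat at hs
    unfold clauseIneq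
    split_ifs at hs ⊢ <;> simp only [] <;> omega
end

section
/- Let φ be a 3-CNF formula over m Boolean variables in which every clause uses three distinct variables, and let S(φ) be the associated system of inequalities over 0/1-valued variables x_1,…,x_m, x_1',…,x_m', α₀, α₁, α₁', α₂, α₂', α₃, α₃' consisting of the 14 group-(G1) inequalities, the 4m group-(G2) inequalities, and one clause inequality per clause of φ. If some 0/1 assignment of all these variables satisfies every inequality of S(φ), then the assignment σ : [m] → {0,1} given by σ(i) = x_i satisfies φ. -/
open Finset

/-- Any 0/1 solution of the system `S(φ)` yields a satisfying
assignment of `φ`, namely `σ i = x i`. -/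
theorem system_solution_satisfies_formula (m : ℕ) (φ : List (Clause3 m))
    (B : Fin 7 → Finset (Fin 7))
    (hB : ∀ a, B a ⊆ Finset.univ \ {a} ∧ (B a).card = 3)
    (x x' : Fin m → ℕ) (α : Fin 7 → ℕ)
    (hx : ∀ i, x i ≤ 1) (hx' : ∀ i, x' i ≤ 1) (hα : ∀ a, α a ≤ 1)
    (h1 : G1ineq x x' α B) (h2 : G2ineq x x' α)
    (h3 : ∀ c ∈ φ, clauseIneq x x' α c) :
    ∀ c ∈ φ, clauseSat x c := by
  have hα1 : ∀ a, α a = 1 := by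
    intro a
    obtain ⟨ha1, ha2⟩ := h1 a
    have := hα a
    omega
  have hXsum : ∀ i : Fin m, x i + ∑ j ∈ Finset.univ.erase i, x j = ∑ j, x j :=
    fun i => Finset.add_sum_erase _ x (Finset.mem_univ i)
  have hXsum' : ∀ i : Fin m, x' i + ∑ j ∈ Finset.univ.erase i, x' j = ∑ j, x' j :=
    fun i => Finset.add_sum_erase _ x' (Finset.mem_univ i)
  have hxx' : ∀ i, x i = x' i := by
    intro i
    obtain ⟨a1, a2, a3, a4⟩ := h2 i
    have e1 := hXsum i
    have e2 := hXsum' i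
    have h0 := hα1 0
    omega
  intro c hc
  have hI := h3 c hc
  obtain ⟨i, j, t, neg, hij, hit, hjt⟩ := c
  have hi := hxx' i
  have hj := hxx' j
  have ht := hxx' t
  have hxi := hx i
  have hxj := hx j
  have hxt := hx t
  have e0 := hα1 0
  have e1 := hα1 1
  have e2 := hα1 2
  have e3 := hα1 3
  have e4 := hα1 4
  have e5 := hα1 5
  have e6 := hα1 6
  fin_cases neg <;>
    simp (config := { decide := true }) [clauseIneq, clauseSat, Fin.ext_iff] at hI ⊢ <;>
    omega
end

section
/- Let φ be a 3-CNF formula over m Boolean variables in which every clause uses three distinct variables, and let S(φ) be the associated system of inequalities over 0/1-valued variables x_1,…,x_m, x_1',…,x_m', α₀, α₁, α₁', α₂, α₂', α₃, α₃'. Then φ is satisfiable if and only if S(φ) has a 0/1 solution. -/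
open Finset

/-- `φ` is satisfiable iff the system `S(φ)` has a 0/1 solution. -/
theorem formula_satisfiable_iff_system_solvable (m : ℕ) (φ : List (Clause3 m))
    (B : Fin 7 → Finset (Fin 7))
    (hB : ∀ a, B a ⊆ Finset.univ \ {a} ∧ (B a).card = 3) :
    (∃ σ : Fin m → ℕ, (∀ i, σ i ≤ 1) ∧ ∀ c ∈ φ, clauseSat σ c) ↔
    (∃ (x x' : Fin m → ℕ) (α : Fin 7 → ℕ),
      (∀ i, x i ≤ 1) ∧ (∀ i, x' i ≤ 1) ∧ (∀ a, α a ≤ 1) ∧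
      G1ineq x x' α B ∧ G2ineq x x' α ∧ ∀ c ∈ φ, clauseIneq x x' α c) := by
  have hcomp : ∀ a, (Finset.univ \ (B a ∪ {a})).card = 3 := by
    intro a
    have hsub := (hB a).1
    have ha : a ∉ B a := by
      intro h
      have := hsub h
      simp at this
    rw [Finset.card_sdiff_of_subset (Finset.subset_univ _),
      Finset.card_union_of_disjoint (by simp [ha]), (hB a).2]
    simp
  constructor
  · rintro ⟨σ, hσ, hsat⟩
    refine ⟨σ, σ, fun _ => 1, hσ, hσ, fun _ => le_refl 1, ?_, ?_, ?_⟩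
    · intro a
      have h1 : (∑ b ∈ B a, (1 : ℕ)) = 3 := by simp [(hB a).2]
      have h2 : (∑ b ∈ Finset.univ \ (B a ∪ {a}), (1 : ℕ)) = 3 := by
        simpa using hcomp a
      rw [h1, h2]
      constructor <;> linarith
    · exact fun i => ⟨by linarith, by linarith, by linarith, by linarith⟩
    · intro c hc
      have hs := hsat c hc
      have hi := hσ c.i
      have hj := hσ c.j
      have ht := hσ c.t
      simp only [clauseSat] at hs
      simp only [clauseIneq]
      split_ifs at hs ⊢ <;> omega
  · rintro ⟨x, x', α, hx, hx', hα, hG1, hG2, hC⟩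
    have hα1 : ∀ a, α a = 1 := by
      intro a
      obtain ⟨h1, h2⟩ := hG1 a
      have := hα a
      omega
    have hP : ∀ a, (∑ b ∈ B a, α b) = 3 := by
      intro a
      rw [Finset.sum_congr rfl (fun b _ => hα1 b)]
      simp [(hB a).2]
    have hQ : ∀ a, (∑ b ∈ Finset.univ \ (B a ∪ {a}), α b) = 3 := by
      intro a
      rw [Finset.sum_congr rfl (fun b _ => hα1 b)]
      simpa using hcomp a
    have hS : (∑ i, x i) = ∑ i, x' i := by
      obtain ⟨h1, h2⟩ := hG1 0
      rw [hP 0, hQ 0, hα1 0] at h1 h2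
      omega
    have hxx : ∀ i, x i = x' i := by
      intro i
      obtain ⟨-, h2, h3, -⟩ := hG2 i
      have e1 : (∑ j ∈ Finset.univ.erase i, x j) + x i = ∑ j, x j :=
        Finset.sum_erase_add _ _ (Finset.mem_univ i)
      have e2 : (∑ j ∈ Finset.univ.erase i, x' j) + x' i = ∑ j, x' j :=
        Finset.sum_erase_add _ _ (Finset.mem_univ i)
      have h0 := hα1 0
      omega
    refine ⟨x, hx, ?_⟩
    intro c hc
    have h := hC c hc
    have hi := hx c.i
    have hj := hx c.j
    have ht := hx c.t
    have ei := hxx c.i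
    have ej := hxx c.j
    have et := hxx c.t
    have a0 := hα1 0
    have a1 := hα1 1
    have a2 := hα1 2
    have a3 := hα1 3
    have a4 := hα1 4
    have a5 := hα1 5
    have a6 := hα1 6
    simp only [clauseIneq] at h
    simp only [clauseSat]
    split_ifs at h ⊢ <;> omega
end

section
/- Let d be an even positive integer, n = d/2, and for each i ∈ {1,…,n} let v_i ∈ {0,1}^d be the agent whose j-th coordinate is 1 iff j > d/2 and j ≠ d/2 + i. Let S ⊆ {1,…,n} with |S| = m < d/2, and let x_S ∈ {0,1}^d be the proposal whose coordinates equal 1 exactly at the first d/2 − m − 1 coordinates and at the coordinates d/2 + j for j ∉ S. Then for every i ∉ S, hammingDist(x_S, v_i) ≥ d/2. -/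
open Finset

/-- The agent `v_i ∈ {0,1}^d` (coordinates 0-indexed): its `j`-th coordinate
is `1` iff `j` is among the last `d/2` coordinates and `j ≠ d/2 + i`. -/
def agentV (d : ℕ) (i : Fin (d / 2)) : Fin d → ℕ :=
  fun j => if d / 2 ≤ j.val ∧ j.val ≠ d / 2 + i.val then 1 else 0

/-- The proposal `x_S ∈ {0,1}^d` (coordinates 0-indexed): its coordinates
equal `1` exactly at the first `d/2 - |S| - 1` coordinates and at the
coordinates `d/2 + j` for `j ∉ S`. -/
def propX (d : ℕ) (S : Finset (Fin (d / 2))) : Fin d → ℕ :=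
  fun j => if j.val < d / 2 - S.card - 1 ∨
      (d / 2 ≤ j.val ∧ ∀ k ∈ S, j.val ≠ d / 2 + k.val) then 1 else 0

/-- every agent `v_i` with `i ∉ S` is at Hamming distance at
least `d/2` from the proposal `x_S`. -/
theorem dist_proposal_outside_coalition (d : ℕ) (hd : 0 < d) (hde : d % 2 = 0)
    (S : Finset (Fin (d / 2))) (hm : S.card < d / 2) :
    ∀ i : Fin (d / 2), i ∉ S → d / 2 ≤ hammingDist (propX d S) (agentV d i) := by
  intro i hi
  have hle : d / 2 - S.card - 1 ≤ d := by omega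
  set A : Finset (Fin d) := (Finset.univ : Finset (Fin (d / 2 - S.card - 1))).map
    (Fin.castLEEmb hle) with hA
  have hg : ∀ t : Fin (d / 2), d / 2 + t.val < d := by
    intro t; have := t.isLt; omega
  set g : Fin (d / 2) ↪ Fin d := ⟨fun t => ⟨d / 2 + t.val, hg t⟩, by
    intro a b hab
    simp only [Fin.mk.injEq] at hab
    exact Fin.ext (by omega)⟩ with hgdef
  set B : Finset (Fin d) := (insert i S).map g with hB
  have hAB : Disjoint A B := by
    rw [Finset.disjoint_left]
    intro a haA haB
    simp only [hA, hB, Finset.mem_map, Finset.mem_univ, true_and] at haA haB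
    obtain ⟨t, rfl⟩ := haA
    obtain ⟨s, -, hs⟩ := haB
    have h1 : ((Fin.castLEEmb hle) t).val = t.val := rfl
    have h2 : (g s).val = d / 2 + s.val := rfl
    have := t.isLt
    rw [hs] at h2
    omega
  have hsub : A ∪ B ⊆ Finset.univ.filter
      (fun j => propX d S j ≠ agentV d i j) := by
    intro a ha
    simp only [Finset.mem_filter, Finset.mem_univ, true_and]
    rcases Finset.mem_union.mp ha with h | h
    · simp only [hA, Finset.mem_map, Finset.mem_univ, true_and] at h
      obtain ⟨t, rfl⟩ := h
      have ht : ((Fin.castLEEmb hle) t).val = t.val := rfl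
      have htl := t.isLt
      have hP : propX d S ((Fin.castLEEmb hle) t) = 1 := by
        unfold propX; rw [if_pos]; exact Or.inl (by omega)
      have hV : agentV d i ((Fin.castLEEmb hle) t) = 0 := by
        unfold agentV; rw [if_neg]
        rintro ⟨h1, -⟩; omega
      omega
    · simp only [hB, Finset.mem_map] at h
      obtain ⟨s, hs, rfl⟩ := h
      have hgv : (g s).val = d / 2 + s.val := rfl
      rcases Finset.mem_insert.mp hs with hsi | hsS
      · -- s = i case
        have hP : propX d S (g s) = 1 := by
          unfold propX; rw [if_pos]
          refine Or.inr ⟨by omega, ?_⟩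
          intro k hk hne
          have hsk : s = k := Fin.ext (by omega)
          exact hi (hsi ▸ hsk ▸ hk)
        have hV : agentV d i (g s) = 0 := by
          unfold agentV; rw [if_neg]
          rintro ⟨-, h2⟩
          exact h2 (by rw [hgv, hsi])
        omega
      · -- s ∈ S case
        have hsi : s.val ≠ i.val := fun h => hi (Fin.ext h ▸ hsS)
        have hP : propX d S (g s) = 0 := by
          unfold propX; rw [if_neg]
          rintro (h1 | ⟨-, h2⟩)
          · have := s.isLt; omega
          · exact h2 s hsS (by omega)
        have hV : agentV d i (g s) = 1 := by
          unfold agentV; rw [if_pos]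
          exact ⟨by omega, by omega⟩
        omega
  have hins : (insert i S).card = S.card + 1 := Finset.card_insert_of_notMem hi
  have hcard : (A ∪ B).card = d / 2 := by
    rw [Finset.card_union_of_disjoint hAB]
    simp only [hA, hB, Finset.card_map, Finset.card_univ, Fintype.card_fin, hins]
    omega
  have hdist : hammingDist (propX d S) (agentV d i)
      = (Finset.univ.filter (fun j => propX d S j ≠ agentV d i j)).card := rfl
  rw [hdist, ← hcard]
  exact Finset.card_le_card hsub
end

section
/- Let d be an even positive integer, n = d/2, and for each i ∈ {1,…,n} let v_i ∈ {0,1}^d be the agent whose j-th coordinate is 1 iff j > d/2 and j ≠ d/2 + i. Let S ⊆ {1,…,n} with |S| = m < d/2, and let x_S ∈ {0,1}^d be the proposal whose coordinates equal 1 exactly at the first d/2 − m − 1 coordinates and at the coordinates d/2 + j for j ∉ S. Then for every i ∈ {1,…,n}, agent v_i supports x_S if and only if i ∈ S. -/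
open Finset

lemma hamming_sum_form {d : ℕ} (F : ℕ → ℕ) (x y : Fin d → ℕ)
    (h : ∀ j : Fin d, (if x j ≠ y j then 1 else 0) = F j.val) :
    hammingDist x y = ∑ j ∈ Finset.range d, F j := by
  classical
  rw [hammingDist, card_filter, ← Fin.sum_univ_eq_sum_range]
  exact Finset.sum_congr rfl fun j _ => h j

lemma ite_ne_ite_iff (P Q : Prop) [Decidable P] [Decidable Q] :
    ((if P then (1 : ℕ) else 0) ≠ (if Q then 1 else 0)) ↔ ¬(P ↔ Q) := by
  by_cases hP : P <;> by_cases hQ : Q <;> simp [hP, hQ]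

/-- agent `v_i` supports the proposal `x_S` iff `i ∈ S`. -/
theorem supports_proposal_iff_mem (d : ℕ) (hd : 0 < d) (hde : d % 2 = 0)
    (S : Finset (Fin (d / 2))) (hm : S.card < d / 2) :
    ∀ i : Fin (d / 2),
      (hammingDist (propX d S) (agentV d i) <
        hammingDist (0 : Fin d → ℕ) (agentV d i)) ↔ i ∈ S := by
  intro i
  classical
  have hdn : d = d / 2 + d / 2 := by omega
  have hin : (i : ℕ) < d / 2 := i.isLt
  -- distance from 0 to the agent
  have h0 : hammingDist (0 : Fin d → ℕ) (agentV d i) = d / 2 - 1 := by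
    rw [hamming_sum_form (fun j => if d / 2 ≤ j ∧ j ≠ d / 2 + i.val then 1 else 0)
      (0 : Fin d → ℕ) (agentV d i) (fun j => by
        simp only [agentV, Pi.zero_apply]
        split <;> simp)]
    rw [show Finset.range d = Finset.range (d / 2 + d / 2) by rw [← hdn], Finset.sum_range_add]
    have h1 : ∑ j ∈ Finset.range (d / 2),
        (if d / 2 ≤ j ∧ j ≠ d / 2 + i.val then 1 else 0) = 0 := by
      apply Finset.sum_eq_zero
      intro j hj
      simp only [Finset.mem_range] at hj
      have : ¬ (d / 2 ≤ j ∧ j ≠ d / 2 + i.val) := by omega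
      simp [this]
    have h2 : ∑ j ∈ Finset.range (d / 2),
        (if d / 2 ≤ d / 2 + j ∧ d / 2 + j ≠ d / 2 + i.val then 1 else 0) = d / 2 - 1 := by
      rw [← Fin.sum_univ_eq_sum_range
        (fun j => if d / 2 ≤ d / 2 + j ∧ d / 2 + j ≠ d / 2 + i.val then 1 else 0) (d / 2)]
      have hc : ∀ k : Fin (d / 2),
          (d / 2 ≤ d / 2 + k.val ∧ d / 2 + k.val ≠ d / 2 + i.val) ↔ k ≠ i := by
        intro k
        constructor
        · rintro ⟨-, h⟩ rfl; exact h rfl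
        · intro h; exact ⟨by omega, fun hc => h (Fin.ext (by omega))⟩
      have hstep : ∑ k : Fin (d / 2),
          (if d / 2 ≤ d / 2 + k.val ∧ d / 2 + k.val ≠ d / 2 + i.val then 1 else 0)
          = ∑ k : Fin (d / 2), (if k ≠ i then 1 else 0) :=
        Finset.sum_congr rfl fun k _ => by simp only [hc k]
      rw [hstep, ← card_filter, filter_ne',
        card_erase_of_mem (mem_univ i), card_univ, Fintype.card_fin]
    omega
  -- distance from the proposal to the agent
  have hA : ∀ k : Fin (d / 2), (∀ k' ∈ S, (d / 2 + k.val ≠ d / 2 + k'.val)) ↔ k ∉ S := by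
    intro k
    constructor
    · intro h hk; exact h k hk rfl
    · intro hk k' hk' heq
      exact hk (by rwa [show k = k' from Fin.ext (by omega)])
  have hDist : hammingDist (propX d S) (agentV d i)
      = (d / 2 - S.card - 1) + (if i ∈ S then S.card - 1 else S.card + 1) := by
    rw [hamming_sum_form
      (fun j => if (if j < d / 2 - S.card - 1 ∨ (d / 2 ≤ j ∧ ∀ k ∈ S, j ≠ d / 2 + k.val)
            then 1 else 0)
          ≠ (if d / 2 ≤ j ∧ j ≠ d / 2 + i.val then 1 else 0) then 1 else 0)
      (propX d S) (agentV d i) (fun j => by simp only [propX, agentV]; congr)]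
    rw [show Finset.range d = Finset.range (d / 2 + d / 2) by rw [← hdn], Finset.sum_range_add]
    have h1 : ∑ j ∈ Finset.range (d / 2),
        (if (if j < d / 2 - S.card - 1 ∨ (d / 2 ≤ j ∧ ∀ k ∈ S, j ≠ d / 2 + k.val) then 1 else 0)
          ≠ (if d / 2 ≤ j ∧ j ≠ d / 2 + i.val then 1 else 0) then 1 else 0)
        = d / 2 - S.card - 1 := by
      have hc : ∀ j ∈ Finset.range (d / 2),
          (if (if j < d / 2 - S.card - 1 ∨ (d / 2 ≤ j ∧ ∀ k ∈ S, j ≠ d / 2 + k.val)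
              then 1 else 0)
            ≠ (if d / 2 ≤ j ∧ j ≠ d / 2 + i.val then 1 else 0) then 1 else 0)
          = if j < d / 2 - S.card - 1 then 1 else 0 := by
        intro j hj
        simp only [Finset.mem_range] at hj
        have hB : ¬ (d / 2 ≤ j ∧ j ≠ d / 2 + i.val) := by omega
        have hA2 : ¬ (d / 2 ≤ j ∧ ∀ k ∈ S, j ≠ d / 2 + k.val) := by
          rintro ⟨h, -⟩; omega
        by_cases hj2 : j < d / 2 - S.card - 1 <;> simp [hB, hA2, hj2]
      rw [Finset.sum_congr rfl hc, ← card_filter]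
      have : (Finset.range (d / 2)).filter (fun j => j < d / 2 - S.card - 1)
          = Finset.range (d / 2 - S.card - 1) := by
        ext j; simp only [mem_filter, mem_range]; omega
      rw [this, card_range]
    have h2 : ∑ j ∈ Finset.range (d / 2),
        (if (if d / 2 + j < d / 2 - S.card - 1 ∨
              (d / 2 ≤ d / 2 + j ∧ ∀ k ∈ S, d / 2 + j ≠ d / 2 + k.val) then 1 else 0)
          ≠ (if d / 2 ≤ d / 2 + j ∧ d / 2 + j ≠ d / 2 + i.val then 1 else 0) then 1 else 0)
        = if i ∈ S then S.card - 1 else S.card + 1 := by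
      rw [← Fin.sum_univ_eq_sum_range
        (fun j => if (if d / 2 + j < d / 2 - S.card - 1 ∨
              (d / 2 ≤ d / 2 + j ∧ ∀ k ∈ S, d / 2 + j ≠ d / 2 + k.val) then 1 else 0)
          ≠ (if d / 2 ≤ d / 2 + j ∧ d / 2 + j ≠ d / 2 + i.val then 1 else 0) then 1 else 0)
        (d / 2)]
      have hterm : ∀ k : Fin (d / 2),
          (if (if d / 2 + k.val < d / 2 - S.card - 1 ∨
              (d / 2 ≤ d / 2 + k.val ∧ ∀ k' ∈ S, d / 2 + k.val ≠ d / 2 + k'.val) then 1 else 0)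
            ≠ (if d / 2 ≤ d / 2 + k.val ∧ d / 2 + k.val ≠ d / 2 + i.val then 1 else 0)
            then 1 else 0)
          = if (k ∈ S ↔ k ≠ i) then 1 else 0 := by
        intro k
        have hA'' : (d / 2 + k.val < d / 2 - S.card - 1 ∨
            (d / 2 ≤ d / 2 + k.val ∧ ∀ k' ∈ S, d / 2 + k.val ≠ d / 2 + k'.val)) ↔ k ∉ S := by
          constructor
          · rintro (h | ⟨-, h⟩)
            · omega
            · exact (hA k).mp h
          · intro h; exact Or.inr ⟨by omega, (hA k).mpr h⟩
        have hB : (d / 2 ≤ d / 2 + k.val ∧ d / 2 + k.val ≠ d / 2 + i.val) ↔ k ≠ i := by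
          constructor
          · rintro ⟨-, h⟩ rfl; exact h rfl
          · intro h; exact ⟨by omega, fun hc => h (Fin.ext (by omega))⟩
        have hfin : ((if (d / 2 + k.val < d / 2 - S.card - 1 ∨
              (d / 2 ≤ d / 2 + k.val ∧ ∀ k' ∈ S, d / 2 + k.val ≠ d / 2 + k'.val))
              then (1:ℕ) else 0)
            ≠ (if d / 2 ≤ d / 2 + k.val ∧ d / 2 + k.val ≠ d / 2 + i.val then 1 else 0))
            ↔ (k ∈ S ↔ k ≠ i) := by
          rw [ite_ne_ite_iff, hA'', hB]
          tauto
        simp only [hfin]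
      rw [Finset.sum_congr rfl fun k _ => hterm k, ← card_filter]
      by_cases hi : i ∈ S
      · have hfe : Finset.univ.filter (fun k : Fin (d / 2) => k ∈ S ↔ k ≠ i) = S.erase i := by
          ext k
          simp only [mem_filter, mem_univ, true_and, mem_erase]
          constructor
          · intro h
            have hki : k ≠ i := by
              intro hk; subst hk; exact (h.mp hi) rfl
            exact ⟨hki, h.mpr hki⟩
          · rintro ⟨hki, hkS⟩; exact ⟨fun _ => hki, fun _ => hkS⟩
        rw [hfe, card_erase_of_mem hi]
        simp [hi]
      · have hfe : Finset.univ.filter (fun k : Fin (d / 2) => k ∈ S ↔ k ≠ i) = insert i S := by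
          ext k
          simp only [mem_filter, mem_univ, true_and, mem_insert]
          by_cases hki : k = i
          · subst hki; simp [hi]
          · simp [hki]
        rw [hfe, card_insert_of_notMem hi]
        simp [hi]
    rw [h1, h2]
  rw [h0, hDist]
  by_cases hi : i ∈ S
  · have h1m : 1 ≤ S.card := Finset.one_le_card.mpr ⟨i, hi⟩
    simp only [hi, if_true, iff_true]
    omega
  · simp only [hi, if_false, iff_false]
    omega
end

section
/- Let d be an even positive integer, n = d/2, and for each i ∈ {1,…,n} let v_i ∈ {0,1}^d be the agent whose j-th coordinate is 1 iff j > d/2 and j ≠ d/2 + i. Then for every subset S ⊆ {1,…,n} with |S| < d/2, there exists a proposal x ∈ {0,1}^d such that the set of agents supporting x is exactly {v_i : i ∈ S}. -/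
open Finset

lemma card_val_filter {d : ℕ} (q : Fin d → Prop) [DecidablePred q]
    (p : ℕ → Prop) [DecidablePred p] (h : ∀ j : Fin d, q j ↔ p j.val) :
    (univ.filter q).card = ((range d).filter p).card := by
  have heq : (range d).filter p = (univ.filter q).image Fin.val := by
    ext a
    simp only [mem_filter, mem_range, mem_image, mem_univ, true_and]
    constructor
    · rintro ⟨ha, hp⟩; exact ⟨⟨a, ha⟩, (h ⟨a, ha⟩).mpr hp, rfl⟩
    · rintro ⟨j, hq, rfl⟩; exact ⟨j.isLt, (h j).mp hq⟩
  rw [heq, card_image_of_injective _ Fin.val_injective]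

lemma indicator_ne (A B : Prop) [Decidable A] [Decidable B] :
    ((if A then (1:ℕ) else 0) ≠ if B then 1 else 0) ↔ (A ↔ ¬ B) := by
  by_cases hA : A <;> by_cases hB : B <;> simp [hA, hB]

/-- for every subset `S` of the agents with `|S| < d/2`, there
is a proposal supported exactly by the agents `v_i`, `i ∈ S`. -/
theorem exists_proposal_supported_exactly (d : ℕ) (hd : 0 < d) (hde : d % 2 = 0)
    (S : Finset (Fin (d / 2))) (hm : S.card < d / 2) :
    ∃ x : Fin d → ℕ, (∀ j, x j ≤ 1) ∧
      ∀ i : Fin (d / 2),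
        (hammingDist x (agentV d i) <
          hammingDist (0 : Fin d → ℕ) (agentV d i)) ↔ i ∈ S := by
  have hd2 : d = 2 * (d / 2) := by omega
  refine ⟨propX d S, ?_, ?_⟩
  · intro j; unfold propX; split <;> omega
  intro i
  -- distance from the status quo
  have hv : hammingDist (0 : Fin d → ℕ) (agentV d i) = d / 2 - 1 := by
    show (univ.filter fun j : Fin d => (0 : Fin d → ℕ) j ≠ agentV d i j).card = d / 2 - 1
    rw [card_val_filter _ (fun a => d / 2 ≤ a ∧ a ≠ d / 2 + i.val) (by
      intro j
      simp only [agentV, Pi.zero_apply]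
      constructor
      · intro h; by_contra hc; simp [hc] at h
      · intro h; simp [h])]
    have h2 : ((range d).filter fun a => d / 2 ≤ a ∧ a ≠ d / 2 + i.val) =
        (Ico (d / 2) d).erase (d / 2 + i.val) := by
      ext a
      simp only [mem_filter, mem_range, mem_erase, mem_Ico]
      omega
    rw [h2, card_erase_of_mem (by simp only [mem_Ico]; have := i.isLt; omega),
      Nat.card_Ico]
    omega
  by_cases hiS : i ∈ S
  · -- distance when i ∈ S
    have hm1 : 1 ≤ S.card := card_pos.mpr ⟨i, hiS⟩
    have hx : hammingDist (propX d S) (agentV d i) =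
        (d / 2 - S.card - 1) + (S.card - 1) := by
      show (univ.filter fun j : Fin d => propX d S j ≠ agentV d i j).card = _
      rw [card_val_filter _ (fun a =>
          a < d / 2 - S.card - 1 ∨ ∃ k ∈ S.erase i, a = d / 2 + k.val) (by
        intro j
        simp only [propX, agentV, indicator_ne, mem_erase]
        by_cases hj : d / 2 ≤ j.val
        · have hlow : ¬ j.val < d / 2 - S.card - 1 := by omega
          have hBeq : ¬ (d / 2 ≤ j.val ∧ j.val ≠ d / 2 + i.val) ↔
              j.val = d / 2 + i.val := by
            constructor
            · intro h; by_contra hc; exact h ⟨hj, hc⟩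
            · intro h hc; exact hc.2 h
          have hAeq : (j.val < d / 2 - S.card - 1 ∨
              (d / 2 ≤ j.val ∧ ∀ k ∈ S, j.val ≠ d / 2 + k.val)) ↔
              (∀ k ∈ S, j.val ≠ d / 2 + k.val) := by
            constructor
            · rintro (h | h)
              · omega
              · exact h.2
            · intro h; exact Or.inr ⟨hj, h⟩
          rw [hAeq, hBeq]
          constructor
          · intro h
            have hne : j.val ≠ d / 2 + i.val := by
              intro he
              exact (h.mpr he) i hiS he
            have h2 : ¬ ∀ k ∈ S, j.val ≠ d / 2 + k.val := fun hall => hne (h.mp hall)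
            push_neg at h2
            obtain ⟨k, hkS, hk⟩ := h2
            refine Or.inr ⟨k, ⟨fun he => ?_, hkS⟩, hk⟩
            subst he; omega
          · rintro (h | ⟨k, ⟨hki, hkS⟩, hk⟩)
            · omega
            · have hki' : k.val ≠ i.val := fun he => hki (Fin.ext he)
              exact iff_of_false (fun hall => hall k hkS hk) (by omega)
        · have hB : ¬ (d / 2 ≤ j.val ∧ j.val ≠ d / 2 + i.val) := fun h => hj h.1
          rw [iff_true_intro hB, iff_true]
          constructor
          · rintro (h | h)
            · exact Or.inl h
            · exact absurd h.1 hj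
          · rintro (h | ⟨k, -, hk⟩)
            · exact Or.inl h
            · omega)]
      have h2 : ((range d).filter fun a =>
          a < d / 2 - S.card - 1 ∨ ∃ k ∈ S.erase i, a = d / 2 + k.val) =
          (range (d / 2 - S.card - 1)) ∪ (S.erase i).image (fun k => d / 2 + k.val) := by
        ext a
        simp only [mem_filter, mem_range, mem_union, mem_image]
        constructor
        · rintro ⟨ha, h | ⟨k, hk, he⟩⟩
          · exact Or.inl h
          · exact Or.inr ⟨k, hk, he.symm⟩
        · rintro (h | ⟨k, hk, he⟩)
          · exact ⟨by omega, Or.inl h⟩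
          · exact ⟨by have := k.isLt; omega, Or.inr ⟨k, hk, he.symm⟩⟩
      rw [h2, card_union_of_disjoint, card_range,
        card_image_of_injective _ (fun a b hab => Fin.ext (by omega)),
        card_erase_of_mem hiS]
      rw [disjoint_left]
      rintro a ha hb
      simp only [mem_range] at ha
      simp only [mem_image] at hb
      obtain ⟨k, -, hk⟩ := hb
      omega
    rw [hx, hv]
    exact iff_of_true (by omega) hiS
  · -- distance when i ∉ S
    have hx : hammingDist (propX d S) (agentV d i) =
        (d / 2 - S.card - 1) + (1 + S.card) := by
      show (univ.filter fun j : Fin d => propX d S j ≠ agentV d i j).card = _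
      rw [card_val_filter _ (fun a => a < d / 2 - S.card - 1 ∨
          a = d / 2 + i.val ∨ ∃ k ∈ S, a = d / 2 + k.val) (by
        intro j
        simp only [propX, agentV, indicator_ne]
        by_cases hj : d / 2 ≤ j.val
        · have hlow : ¬ j.val < d / 2 - S.card - 1 := by omega
          have hBeq : ¬ (d / 2 ≤ j.val ∧ j.val ≠ d / 2 + i.val) ↔
              j.val = d / 2 + i.val := by
            constructor
            · intro h; by_contra hc; exact h ⟨hj, hc⟩
            · intro h hc; exact hc.2 h
          have hAeq : (j.val < d / 2 - S.card - 1 ∨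
              (d / 2 ≤ j.val ∧ ∀ k ∈ S, j.val ≠ d / 2 + k.val)) ↔
              (∀ k ∈ S, j.val ≠ d / 2 + k.val) := by
            constructor
            · rintro (h | h)
              · omega
              · exact h.2
            · intro h; exact Or.inr ⟨hj, h⟩
          rw [hAeq, hBeq]
          constructor
          · intro h
            by_cases he : j.val = d / 2 + i.val
            · exact Or.inr (Or.inl he)
            · have h2 : ¬ ∀ k ∈ S, j.val ≠ d / 2 + k.val := fun hall => he (h.mp hall)
              push_neg at h2
              obtain ⟨k, hkS, hk⟩ := h2
              exact Or.inr (Or.inr ⟨k, hkS, hk⟩)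
          · rintro (h | he | ⟨k, hkS, hk⟩)
            · omega
            · refine iff_of_true (fun k hkS hk => ?_) he
              have : k = i := Fin.ext (by omega)
              exact hiS (this ▸ hkS)
            · have hki' : k.val ≠ i.val := fun h' => hiS ((Fin.ext h' : k = i) ▸ hkS)
              exact iff_of_false (fun hall => hall k hkS hk) (by omega)
        · have hB : ¬ (d / 2 ≤ j.val ∧ j.val ≠ d / 2 + i.val) := fun h => hj h.1
          rw [iff_true_intro hB, iff_true]
          constructor
          · rintro (h | h)
            · exact Or.inl h
            · exact absurd h.1 hj
          · rintro (h | he | ⟨k, -, hk⟩)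
            · exact Or.inl h
            · omega
            · omega)]
      have h2 : ((range d).filter fun a =>
          a < d / 2 - S.card - 1 ∨ a = d / 2 + i.val ∨ ∃ k ∈ S, a = d / 2 + k.val) =
          (range (d / 2 - S.card - 1)) ∪
            insert (d / 2 + i.val) (S.image (fun k => d / 2 + k.val)) := by
        ext a
        simp only [mem_filter, mem_range, mem_union, mem_insert, mem_image]
        constructor
        · rintro ⟨ha, h | he | ⟨k, hk, heq⟩⟩
          · exact Or.inl h
          · exact Or.inr (Or.inl he)
          · exact Or.inr (Or.inr ⟨k, hk, heq.symm⟩)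
        · rintro (h | he | ⟨k, hk, heq⟩)
          · exact ⟨by omega, Or.inl h⟩
          · exact ⟨by have := i.isLt; omega, Or.inr (Or.inl he)⟩
          · exact ⟨by have := k.isLt; omega, Or.inr (Or.inr ⟨k, hk, heq.symm⟩)⟩
      have hnotmem : d / 2 + i.val ∉ S.image (fun k => d / 2 + k.val) := by
        simp only [mem_image]
        rintro ⟨k, hkS, hk⟩
        exact hiS ((Fin.ext (by omega) : k = i) ▸ hkS)
      rw [h2, card_union_of_disjoint, card_range, card_insert_of_notMem hnotmem,
        card_image_of_injective _ (fun a b hab => Fin.ext (by omega))]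
      · omega
      · rw [disjoint_left]
        rintro a ha hb
        simp only [mem_range] at ha
        simp only [mem_insert, mem_image] at hb
        rcases hb with hb | ⟨k, -, hk⟩ <;> omega
    rw [hx, hv]
    exact iff_of_false (by omega) hiS
end

section
/- Let v_1,…,v_n ∈ {0,1}^d be agents, and for b ∈ {0,1}^n let n_b be the number of coordinates j ∈ {1,…,d} such that (v_i)_j = b_i for all i (the number of coordinates of type b). Then for every subset S ⊆ {1,…,n}, the following are equivalent: (i) there exists a proposal x ∈ {0,1}^d such that for every i, agent v_i supports x if and only if i ∈ S; (ii) there exist natural numbers (x_b)_{b ∈ {0,1}^n} with x_b ≤ n_b for all b, such that for every i ∈ S, ∑_{b : b_i = 0} x_b + 1 ≤ ∑_{b : b_i = 1} x_b, and for every i ∉ S, ∑_{b : b_i = 1} x_b ≤ ∑_{b : b_i = 0} x_b. -/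
open Finset

/-- The set of coordinates `j ∈ {1,…,d}` of type `b ∈ {0,1}^n`, i.e. with
`(v i) j = b i` for all agents `i`. -/
def typeSet {n d : ℕ} (v : Fin n → Fin d → ℕ) (b : Fin n → Bool) :
    Finset (Fin d) :=
  Finset.univ.filter fun j => ∀ i, v i j = if b i then 1 else 0

/-- `n_b`: the number of coordinates of type `b`. -/
def nB {n d : ℕ} (v : Fin n → Fin d → ℕ) (b : Fin n → Bool) : ℕ :=
  (typeSet v b).card

/-- `x_b`: the number of coordinates of type `b` where the proposal `x`
equals `1`. -/
def xB {n d : ℕ} (v : Fin n → Fin d → ℕ) (x : Fin d → ℕ) (b : Fin n → Bool) : ℕ :=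
  ((typeSet v b).filter fun j => x j = 1).card

def btype {n d : ℕ} (v : Fin n → Fin d → ℕ) (j : Fin d) : Fin n → Bool :=
  fun i => decide (v i j = 1)

lemma mem_typeSet_iff {n d : ℕ} {v : Fin n → Fin d → ℕ} (hv : ∀ i j, v i j ≤ 1)
    {j : Fin d} {b : Fin n → Bool} : j ∈ typeSet v b ↔ btype v j = b := by
  simp only [typeSet, mem_filter, mem_univ, true_and, btype]
  constructor
  · intro h
    funext i
    specialize h i
    cases hb : b i <;> rw [hb] at h <;> simp at h <;> simp [btype, h]
  · intro h i
    have h1 : decide (v i j = 1) = b i := congrFun h i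
    have h2 := hv i j
    cases hb : b i <;> rw [hb] at h1 <;> simp at h1 <;> simp [h1] <;> omega

lemma sum_card_filter {n d : ℕ} {v : Fin n → Fin d → ℕ} (hv : ∀ i j, v i j ≤ 1)
    (p : Fin d → Prop) [DecidablePred p] (B : Finset (Fin n → Bool)) :
    ∑ b ∈ B, ((typeSet v b).filter p).card =
      (univ.filter fun j => p j ∧ btype v j ∈ B).card := by
  rw [← card_biUnion]
  · congr 1
    ext j
    simp only [mem_biUnion, mem_filter, mem_univ, true_and, mem_typeSet_iff hv]
    constructor
    · rintro ⟨b, hb, rfl, hp⟩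
      exact ⟨hp, hb⟩
    · rintro ⟨hp, hb⟩
      exact ⟨btype v j, hb, rfl, hp⟩
  · intro b hb b' hb' hne
    simp only [disjoint_left, mem_filter, mem_typeSet_iff hv]
    rintro j ⟨rfl, -⟩ ⟨h, -⟩
    exact hne h

lemma support_iff {n d : ℕ} {v : Fin n → Fin d → ℕ} (hv : ∀ i j, v i j ≤ 1)
    (x : Fin d → ℕ) (hx : ∀ j, x j ≤ 1) (i : Fin n) :
    (hammingDist x (v i) < hammingDist (0 : Fin d → ℕ) (v i)) ↔
      (∑ b ∈ univ.filter (fun b : Fin n → Bool => b i = false), xB v x b) <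
        ∑ b ∈ univ.filter (fun b : Fin n → Bool => b i = true), xB v x b := by
  have hA : (∑ b ∈ univ.filter (fun b : Fin n → Bool => b i = false), xB v x b)
      = (univ.filter fun j => x j = 1 ∧ v i j = 0).card := by
    simp only [xB]
    rw [sum_card_filter hv]
    congr 1
    ext j
    have := hv i j
    simp only [mem_filter, mem_univ, true_and, btype, decide_eq_false_iff_not]
    omega
  have hB : (∑ b ∈ univ.filter (fun b : Fin n → Bool => b i = true), xB v x b)
      = (univ.filter fun j => x j = 1 ∧ v i j = 1).card := by
    simp only [xB]
    rw [sum_card_filter hv]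
    congr 1
    ext j
    simp only [mem_filter, mem_univ, true_and, btype, decide_eq_true_eq]
  have hd1 : hammingDist x (v i)
      = (univ.filter fun j => x j = 1 ∧ v i j = 0).card
        + (univ.filter fun j => x j = 0 ∧ v i j = 1).card := by
    clear hA hB
    rw [← card_union_of_disjoint, ← filter_or]
    · unfold hammingDist
      congr 1
      ext j
      have := hv i j
      have := hx j
      simp only [mem_filter, mem_univ, true_and, ne_eq]
      omega
    · simp only [disjoint_left, mem_filter]
      rintro j ⟨-, h1, -⟩ ⟨-, h2, -⟩
      omega
  have hd0 : hammingDist (0 : Fin d → ℕ) (v i)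
      = (univ.filter fun j => x j = 1 ∧ v i j = 1).card
        + (univ.filter fun j => x j = 0 ∧ v i j = 1).card := by
    clear hA hB hd1
    rw [← card_union_of_disjoint, ← filter_or]
    · unfold hammingDist
      congr 1
      ext j
      have := hv i j
      have := hx j
      simp only [mem_filter, mem_univ, true_and, ne_eq, Pi.zero_apply]
      omega
    · simp only [disjoint_left, mem_filter]
      rintro j ⟨-, h1, -⟩ ⟨-, h2, -⟩
      omega
  rw [hA, hB, hd1, hd0]
  clear hA hB hd1 hd0
  generalize (univ.filter fun j => x j = 1 ∧ v i j = 0).card = A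
  generalize (univ.filter fun j => x j = 1 ∧ v i j = 1).card = B
  generalize (univ.filter fun j => x j = 0 ∧ v i j = 1).card = C
  omega

/-- there exists a proposal supported exactly by the agents in
`S` iff the integer linear program on the variables `(x_b)_{b ∈ {0,1}^n}` is
feasible. -/
theorem exists_proposal_iff_ILP_feasible (n d : ℕ) (v : Fin n → Fin d → ℕ)
    (hv : ∀ i j, v i j ≤ 1) (S : Finset (Fin n)) :
    (∃ x : Fin d → ℕ, (∀ j, x j ≤ 1) ∧
      ∀ i : Fin n,
        (hammingDist x (v i) < hammingDist (0 : Fin d → ℕ) (v i)) ↔ i ∈ S) ↔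
    (∃ y : (Fin n → Bool) → ℕ, (∀ b, y b ≤ nB v b) ∧
      (∀ i ∈ S,
        (∑ b ∈ Finset.univ.filter (fun b : Fin n → Bool => b i = false), y b) + 1 ≤
          ∑ b ∈ Finset.univ.filter (fun b : Fin n → Bool => b i = true), y b) ∧
      (∀ i ∉ S,
        (∑ b ∈ Finset.univ.filter (fun b : Fin n → Bool => b i = true), y b) ≤
          ∑ b ∈ Finset.univ.filter (fun b : Fin n → Bool => b i = false), y b)) := by
  constructor
  · rintro ⟨x, hx, hsupp⟩
    refine ⟨xB v x, fun b => card_filter_le _ _, fun i hi => ?_, fun i hi => ?_⟩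
    · have h := (support_iff hv x hx i).mp ((hsupp i).mpr hi)
      clear hsupp
      revert h
      generalize (∑ b ∈ univ.filter (fun b : Fin n → Bool => b i = false), xB v x b) = A
      generalize (∑ b ∈ univ.filter (fun b : Fin n → Bool => b i = true), xB v x b) = B
      omega
    · have h : ¬ (hammingDist x (v i) < hammingDist (0 : Fin d → ℕ) (v i)) := by
        rw [hsupp i]; exact hi
      rw [support_iff hv x hx i] at h
      clear hsupp
      revert h
      generalize (∑ b ∈ univ.filter (fun b : Fin n → Bool => b i = false), xB v x b) = A
      generalize (∑ b ∈ univ.filter (fun b : Fin n → Bool => b i = true), xB v x b) = B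
      omega
  · rintro ⟨y, hy, hS, hnS⟩
    choose T hT1 hT2 using fun b => Finset.exists_subset_card_eq (hy b)
    set x : Fin d → ℕ := fun j => if j ∈ T (btype v j) then 1 else 0 with hxdef
    have hx : ∀ j, x j ≤ 1 := by
      intro j; simp only [hxdef]; split <;> omega
    have hxy : ∀ b, xB v x b = y b := by
      intro b
      rw [← hT2 b]
      simp only [xB]
      congr 1
      ext j
      simp only [mem_filter]
      constructor
      · rintro ⟨hj, hj1⟩
        rw [mem_typeSet_iff hv] at hj
        simp only [hxdef, hj] at hj1
        by_contra hc
        simp [hc] at hj1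
      · intro hj
        have hmem := hT1 b hj
        have hb : btype v j = b := (mem_typeSet_iff hv).mp hmem
        refine ⟨hmem, ?_⟩
        simp [hxdef, hb, hj]
    refine ⟨x, hx, fun i => ?_⟩
    rw [support_iff hv x hx i,
      Finset.sum_congr rfl (fun b _ => hxy b), Finset.sum_congr rfl (fun b _ => hxy b)]
    by_cases hi : i ∈ S
    · have h := hS i hi
      simp only [hi, iff_true]
      clear hS hnS
      revert h
      generalize (∑ b ∈ univ.filter (fun b : Fin n → Bool => b i = false), y b) = A
      generalize (∑ b ∈ univ.filter (fun b : Fin n → Bool => b i = true), y b) = B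
      omega
    · have h := hnS i hi
      simp only [hi, iff_false, not_lt]
      clear hS hnS
      revert h
      generalize (∑ b ∈ univ.filter (fun b : Fin n → Bool => b i = false), y b) = A
      generalize (∑ b ∈ univ.filter (fun b : Fin n → Bool => b i = true), y b) = B
      omega
end
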